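/- Let D₁, D₂ ⊆ ℝ⁺ be sets with 0 ∈ D₁ ∩ D₂. The following statements are equivalent: (i) there exist sets A₁, A₂, A₃ ⊆ ℝ⁺ with A₂ ≠ ∅ such that both D₁ and D₂ (with the order induced from ℝ) are order-isomorphic to the ordered sum A₁ + A₂·tp(ℤ) + A₃, i.e., to the lexicographic sum A₁ ⊕ (ℤ ×_lex A₂) ⊕ A₃ where the middle summand consists of ℤ-many consecutive copies of A₂; (ii) there exist ultrametric spaces (X,d_X), (Y,d_Y) with D(X) = D₁ and D(Y) = D₂ and weak similarities Φ₁ : X → Y and Φ₂ : X → Y such that Φ₁⁻¹∘Φ₂ is not an isometry of X; (iii) there exist semimetric spaces (X,d_X), (Y,d_Y) with D(X) = D₁ and D(Y) = D₂ and weak similarities Φ₁ : X → Y and Φ₂ : X → Y such that Φ₁⁻¹∘Φ₂ is not an isometry of X. -/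

import Mathlib

/-- A semimetric on `X`: nonnegative, symmetric, vanishing exactly on the diagonal. -/
def IsSemimetric {X : Type*} (d : X → X → ℝ) : Prop :=
  (∀ x y, 0 ≤ d x y) ∧ (∀ x y, d x y = d y x) ∧ ∀ x y, d x y = 0 ↔ x = y

/-- An ultrametric (as a semimetric satisfying the strong triangle inequality;
this makes it a metric). -/
def IsUltrametric {X : Type*} (d : X → X → ℝ) : Prop :=
  IsSemimetric d ∧ ∀ x y z, d x y ≤ max (d x z) (d z y)

/-- The distance set `D(X)` of a semimetric space `(X, d)`. -/
def distSet {X : Type*} (d : X → X → ℝ) : Set ℝ := {r | ∃ x y, d x y = r}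

/-- `Φ : X → Y` is a weak similarity from `(X, dX)` to `(Y, dY)`. -/
def IsWeakSimilarity {X Y : Type*} (dX : X → X → ℝ) (dY : Y → Y → ℝ) (Φ : X → Y) : Prop :=
  Function.Surjective Φ ∧ ∃ f : ℝ → ℝ, StrictMonoOn f (distSet dY) ∧
    Set.MapsTo f (distSet dY) (distSet dX) ∧ ∀ x y, dX x y = f (dY (Φ x) (Φ y))

/-- `D` is order isomorphic to the ordered sum `A₁ + A₂ · tp(ℤ) + A₃`. -/
def IsZSumType (D A₁ A₂ A₃ : Set ℝ) : Prop :=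
  Nonempty (↥D ≃o (↥A₁ ⊕ₗ ((ℤ ×ₗ ↥A₂) ⊕ₗ ↥A₃)))

open Sum

/-! ### The maximum ultrametric on a set of nonnegative reals -/

open Classical in
noncomputable def dmax (D : Set ℝ) : ↥D → ↥D → ℝ :=
  fun x y => if x = y then 0 else max ↑x ↑y

lemma dmax_self (D : Set ℝ) (x : ↥D) : dmax D x x = 0 := if_pos rfl

lemma dmax_ne (D : Set ℝ) {x y : ↥D} (h : x ≠ y) : dmax D x y = max ↑x ↑y := if_neg h

lemma dmax_ultra (D : Set ℝ) (hD : D ⊆ Set.Ici 0) : IsUltrametric (dmax D) := by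
  have hnn : ∀ x y : ↥D, 0 ≤ dmax D x y := by
    intro x y
    by_cases h : x = y
    · simp [dmax, h]
    · rw [dmax_ne D h]
      exact le_max_of_le_left (hD x.2)
  refine ⟨⟨hnn, ?_, ?_⟩, ?_⟩
  · intro x y
    by_cases h : x = y
    · simp [h]
    · rw [dmax_ne D h, dmax_ne D (Ne.symm h), max_comm]
  · intro x y
    constructor
    · intro h
      by_contra hxy
      rw [dmax_ne D hxy] at h
      have hx := hD x.2
      have hy := hD y.2
      have hx0 : (x : ℝ) = 0 := le_antisymm (le_of_max_le_left h.le) hx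
      have hy0 : (y : ℝ) = 0 := le_antisymm (le_of_max_le_right h.le) hy
      exact hxy (Subtype.ext (hx0.trans hy0.symm))
    · rintro rfl; exact dmax_self D x
  · intro x y z
    by_cases hxy : x = y
    · subst hxy; rw [dmax_self]
      exact le_max_of_le_left (hnn x z)
    rw [dmax_ne D hxy]
    by_cases hxz : x = z
    · subst hxz
      rw [dmax_ne D hxy]
      exact le_max_right _ _
    by_cases hzy : z = y
    · subst hzy
      rw [dmax_ne D hxy]
      exact le_max_left _ _
    rw [dmax_ne D hxz, dmax_ne D hzy]
    rcases max_cases (x:ℝ) (y:ℝ) with ⟨he, _⟩ | ⟨he, _⟩ <;> rw [he]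
    · exact le_max_of_le_left (le_max_left _ _)
    · exact le_max_of_le_right (le_max_right _ _)

lemma dmax_distSet (D : Set ℝ) (hD : D ⊆ Set.Ici 0) (h0 : (0:ℝ) ∈ D) :
    distSet (dmax D) = D := by
  ext r
  constructor
  · rintro ⟨x, y, rfl⟩
    by_cases h : x = y
    · simp [dmax, h, h0]
    · rw [dmax_ne D h]
      rcases max_choice (x:ℝ) (y:ℝ) with he | he <;> rw [he]
      exacts [x.2, y.2]
  · intro hr
    by_cases h : r = 0
    · exact ⟨⟨r, hr⟩, ⟨r, hr⟩, by rw [dmax_self, h]⟩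
    · refine ⟨⟨r, hr⟩, ⟨0, h0⟩, ?_⟩
      rw [dmax_ne D (by simp [Subtype.ext_iff, h])]
      exact max_eq_left (hD hr)

/-! ### Order isomorphisms between distance sets fix zero -/

lemma iso_fix_zero {D E : Set ℝ} (hD : D ⊆ Set.Ici 0) (hE : E ⊆ Set.Ici 0)
    (h0D : (0:ℝ) ∈ D) (h0E : (0:ℝ) ∈ E) (ψ : ↥D ≃o ↥E) :
    ψ ⟨0, h0D⟩ = ⟨0, h0E⟩ := by
  refine le_antisymm ?_ ?_
  · have h1 : (⟨0, h0D⟩ : ↥D) ≤ ψ.symm ⟨0, h0E⟩ := by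
      have := hD (ψ.symm ⟨0, h0E⟩).2
      exact Subtype.coe_le_coe.mp this
    have := ψ.monotone h1
    rwa [ψ.apply_symm_apply] at this
  · exact Subtype.coe_le_coe.mp (hE (ψ ⟨0, h0D⟩).2)

lemma coe_sup {E : Set ℝ} (a b : ↥E) : ((a ⊔ b : ↥E) : ℝ) = max ↑a ↑b := by
  exact (Subtype.mono_coe E).map_max

/-! ### Order isomorphisms of distance sets induce weak similarities of `dmax` spaces -/

lemma dmax_weakSim {D E : Set ℝ} (hD : D ⊆ Set.Ici 0) (hE : E ⊆ Set.Ici 0)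
    (h0D : (0:ℝ) ∈ D) (h0E : (0:ℝ) ∈ E) (ψ : ↥D ≃o ↥E) :
    IsWeakSimilarity (dmax D) (dmax E) (fun x => ψ x) := by
  classical
  refine ⟨fun y => ⟨ψ.symm y, ψ.apply_symm_apply y⟩,
    fun r => if hr : r ∈ E then ↑(ψ.symm ⟨r, hr⟩) else r, ?_, ?_, ?_⟩
  · rw [dmax_distSet E hE h0E]
    intro r hr s hs hrs
    dsimp only
    rw [dif_pos hr, dif_pos hs]
    exact Subtype.coe_lt_coe.mpr (ψ.symm.strictMono (Subtype.mk_lt_mk.mpr hrs))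
  · rw [dmax_distSet E hE h0E, dmax_distSet D hD h0D]
    intro r hr
    dsimp only
    rw [dif_pos hr]
    exact (ψ.symm ⟨r, hr⟩).2
  · intro x y
    by_cases h : x = y
    · subst h
      rw [dmax_self, dmax_self]
      dsimp only
      rw [dif_pos h0E]
      have hfix : ψ.symm ⟨0, h0E⟩ = ⟨0, h0D⟩ := by
        rw [← iso_fix_zero hD hE h0D h0E ψ, ψ.symm_apply_apply]
      rw [hfix]
    · have hψ : ψ x ≠ ψ y := fun he => h (ψ.injective he)
      rw [dmax_ne D h, dmax_ne E hψ]
      have hmax : max ((ψ x : ℝ)) ((ψ y : ℝ)) = ((ψ (x ⊔ y) : ↥E) : ℝ) := by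
        rw [ψ.monotone.map_max, coe_sup]
      rw [hmax]
      dsimp only
      rw [dif_pos (ψ (x ⊔ y)).2]
      have heta : (⟨((ψ (x ⊔ y) : ↥E) : ℝ), (ψ (x ⊔ y)).2⟩ : ↥E) = ψ (x ⊔ y) := rfl
      rw [heta, ψ.symm_apply_apply, coe_sup]

/-! ### The shift automorphism of an ordered sum `A₁ + A₂·tp(ℤ) + A₃` -/

def SumShift (α β γ : Type*) [PartialOrder α] [PartialOrder β] [PartialOrder γ] :
    (α ⊕ₗ ((ℤ ×ₗ β) ⊕ₗ γ)) ≃o (α ⊕ₗ ((ℤ ×ₗ β) ⊕ₗ γ)) where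
  toFun x := match ofLex x with
    | Sum.inl a => toLex (Sum.inl a)
    | Sum.inr y => toLex (Sum.inr (match ofLex y with
      | Sum.inl m => toLex (Sum.inl (toLex ((ofLex m).1 + 1, (ofLex m).2)))
      | Sum.inr c => toLex (Sum.inr c)))
  invFun x := match ofLex x with
    | Sum.inl a => toLex (Sum.inl a)
    | Sum.inr y => toLex (Sum.inr (match ofLex y with
      | Sum.inl m => toLex (Sum.inl (toLex ((ofLex m).1 - 1, (ofLex m).2)))
      | Sum.inr c => toLex (Sum.inr c)))
  left_inv x := by
    rcases x with a | (m | c)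
    · rfl
    · show toLex (Sum.inr (toLex (Sum.inl (toLex ((ofLex m).1 + 1 - 1, (ofLex m).2))))) = _
      rw [add_sub_cancel_right]
      rfl
    · rfl
  right_inv x := by
    rcases x with a | (m | c)
    · rfl
    · show toLex (Sum.inr (toLex (Sum.inl (toLex ((ofLex m).1 - 1 + 1, (ofLex m).2))))) = _
      rw [sub_add_cancel]
      rfl
    · rfl
  map_rel_iff' := by
    intro x y
    rcases x with a | (m | c) <;> rcases y with a' | (m' | c')
    · exact Iff.rfl
    · exact iff_of_true (Lex.inl_le_inr _ _) (Lex.inl_le_inr _ _)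
    · exact iff_of_true (Lex.inl_le_inr _ _) (Lex.inl_le_inr _ _)
    · exact iff_of_false (Lex.not_inr_le_inl) (Lex.not_inr_le_inl)
    · show toLex (Sum.inr (toLex (Sum.inl (toLex ((ofLex m).1 + 1, (ofLex m).2))))) ≤
          toLex (Sum.inr (toLex (Sum.inl (toLex ((ofLex m').1 + 1, (ofLex m').2))))) ↔
          toLex (Sum.inr (toLex (Sum.inl (toLex (ofLex m))))) ≤
          toLex (Sum.inr (toLex (Sum.inl (toLex (ofLex m')))))
      rw [Lex.inr_le_inr_iff, Lex.inr_le_inr_iff, Lex.inl_le_inl_iff, Lex.inl_le_inl_iff,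
        Prod.Lex.le_iff, Prod.Lex.le_iff]
      simp
    · exact iff_of_true
        (Lex.inr_le_inr_iff.mpr (Lex.inl_le_inr _ _))
        (Lex.inr_le_inr_iff.mpr (Lex.inl_le_inr _ _))
    · exact iff_of_false (Lex.not_inr_le_inl) (Lex.not_inr_le_inl)
    · exact iff_of_false
        (fun h => Lex.not_inr_le_inl (Lex.inr_le_inr_iff.mp h))
        (fun h => Lex.not_inr_le_inl (Lex.inr_le_inr_iff.mp h))
    · exact Iff.rfl

lemma SumShift_apply_mid (α β γ : Type*) [PartialOrder α] [PartialOrder β] [PartialOrder γ]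
    (n : ℤ) (b : β) :
    SumShift α β γ (toLex (Sum.inr (toLex (Sum.inl (toLex (n, b)))))) =
      toLex (Sum.inr (toLex (Sum.inl (toLex (n + 1, b))))) := rfl

/-- Projection extracting the `ℤ` coordinate of a middle element. -/
def projZ (α β γ : Type*) : (α ⊕ₗ ((ℤ ×ₗ β) ⊕ₗ γ)) → ℤ := fun w =>
  Sum.elim (fun _ => 0)
    (fun y => Sum.elim (fun m => (ofLex m).1) (fun _ => 0) (ofLex y)) (ofLex w)

/-! ### Decomposition of a linear order with a nontrivial automorphism -/

noncomputable def Fmap (D : Set ℝ) (g : ↥D ≃o ↥D) (A₁ A₂ A₃ : Set ℝ)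
    (h₁ : A₁ ⊆ D) (h₂ : A₂ ⊆ D) (h₃ : A₃ ⊆ D) :
    (↥A₁ ⊕ₗ ((ℤ ×ₗ ↥A₂) ⊕ₗ ↥A₃)) → ↥D := fun x =>
  Sum.elim (fun a => (⟨a.1, h₁ a.2⟩ : ↥D))
    (fun y => Sum.elim
      (fun m => (g ^ (ofLex m).1) ⟨((ofLex m).2 : ↥A₂).1, h₂ ((ofLex m).2).2⟩)
      (fun c => (⟨c.1, h₃ c.2⟩ : ↥D)) (ofLex y)) (ofLex x)

lemma decomp_of_auto_aux (D : Set ℝ) (g : ↥D ≃o ↥D) (z : ↥D) (hz : z < g z) :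
    ∃ A₁ A₂ A₃ : Set ℝ, A₁ ⊆ D ∧ A₂ ⊆ D ∧ A₃ ⊆ D ∧ A₂.Nonempty ∧
      Nonempty (↥D ≃o (↥A₁ ⊕ₗ ((ℤ ×ₗ ↥A₂) ⊕ₗ ↥A₃))) := by
  classical
  set p : ℤ → ↥D := fun n => (g ^ n) z with hp
  have hcomp : ∀ (m k : ℤ) (x : ↥D), (g ^ m) ((g ^ k) x) = (g ^ (m + k)) x := by
    intro m k x
    rw [zpow_add]
    rfl
  have hp_succ : ∀ n : ℤ, p (n + 1) = (g ^ n) (g z) := by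
    intro n
    show (g ^ (n + 1)) z = _
    rw [zpow_add, zpow_one]
    rfl
  have hpmono : StrictMono p := by
    refine strictMono_int_of_lt_succ fun n => ?_
    rw [hp_succ]
    exact (g ^ n).strictMono hz
  set q : ℤ → ℝ := fun n => (p n : ℝ) with hq
  have hqmono : StrictMono q := fun a b h => Subtype.coe_lt_coe.mpr (hpmono h)
  refine ⟨D ∩ {r | ∀ n : ℤ, r < q n}, D ∩ Set.Ico (q 0) (q 1), D ∩ {r | ∀ n : ℤ, q n ≤ r},
    Set.inter_subset_left, Set.inter_subset_left, Set.inter_subset_left, ?_, ?_⟩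
  · refine ⟨(z : ℝ), z.2, le_of_eq ?_, ?_⟩
    · show (z:ℝ) = ((g ^ (0:ℤ)) z : ℝ)
      rw [zpow_zero]
      rfl
    · show (z:ℝ) < ((g ^ (1:ℤ)) z : ℝ)
      rw [zpow_one]
      exact Subtype.coe_lt_coe.mpr hz
  set A₁ := D ∩ {r | ∀ n : ℤ, r < q n} with hA₁
  set A₂ := D ∩ Set.Ico (q 0) (q 1) with hA₂
  set A₃ := D ∩ {r | ∀ n : ℤ, q n ≤ r} with hA₃
  have hp0 : p 0 = z := by show (g ^ (0:ℤ)) z = z; rw [zpow_zero]; rfl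
  have key1 : ∀ (n : ℤ) (b : ↥D), q 0 ≤ (b:ℝ) → p n ≤ (g ^ n) b := by
    intro n b hb
    have : z ≤ b := by rw [← hp0]; exact Subtype.coe_le_coe.mp hb
    exact (g ^ n).monotone this
  have key2 : ∀ (n : ℤ) (b : ↥D), (b:ℝ) < q 1 → (g ^ n) b < p (n + 1) := by
    intro n b hb
    rw [hp_succ]
    refine (g ^ n).strictMono ?_
    have : (b:ℝ) < ((g ^ (1:ℤ)) z : ℝ) := hb
    rw [zpow_one] at this
    exact Subtype.coe_lt_coe.mp this
  have hFmono : StrictMono (Fmap D g A₁ A₂ A₃ Set.inter_subset_left Set.inter_subset_left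
      Set.inter_subset_left) := by
    intro x y hxy
    rcases x with a | (⟨n, b⟩ | c) <;> rcases y with a' | (⟨n', b'⟩ | c')
    · show (⟨a.1, _⟩ : ↥D) < (⟨a'.1, _⟩ : ↥D)
      exact Subtype.mk_lt_mk.mpr (Subtype.coe_lt_coe.mpr (Lex.inl_lt_inl_iff.mp hxy))
    · show (⟨a.1, _⟩ : ↥D) < (g ^ n') ⟨b'.1, _⟩
      calc (⟨a.1, _⟩ : ↥D) < p n' := Subtype.coe_lt_coe.mp (a.2.2 n')
        _ ≤ (g ^ n') ⟨b'.1, _⟩ := key1 n' _ b'.2.2.1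
    · show (⟨a.1, _⟩ : ↥D) < (⟨c'.1, _⟩ : ↥D)
      have h1 : (a:ℝ) < q 0 := a.2.2 0
      have h2 : q 0 ≤ (c':ℝ) := c'.2.2 0
      exact Subtype.mk_lt_mk.mpr (h1.trans_le h2)
    · exact absurd hxy (Lex.not_inr_lt_inl)
    · show (g ^ n) ⟨b.1, _⟩ < (g ^ n') ⟨b'.1, _⟩
      have hlt : toLex ((n, b) : ℤ × ↥A₂) < toLex ((n', b') : ℤ × ↥A₂) :=
        Lex.inl_lt_inl_iff.mp (Lex.inr_lt_inr_iff.mp hxy)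
      rcases Prod.Lex.toLex_lt_toLex.mp hlt with h | ⟨h1, h2⟩
      · calc (g ^ n) ⟨b.1, _⟩ < p (n + 1) := key2 n _ b.2.2.2
          _ ≤ p n' := hpmono.monotone (by omega)
          _ ≤ (g ^ n') ⟨b'.1, _⟩ := key1 n' _ b'.2.2.1
      · dsimp only at h1 h2
        subst h1
        exact (g ^ n).strictMono (Subtype.mk_lt_mk.mpr (Subtype.coe_lt_coe.mpr h2))
    · show (g ^ n) ⟨b.1, _⟩ < (⟨c'.1, _⟩ : ↥D)
      calc (g ^ n) ⟨b.1, _⟩ < p (n + 1) := key2 n _ b.2.2.2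
        _ ≤ ⟨c'.1, _⟩ := Subtype.coe_le_coe.mp (c'.2.2 (n + 1))
    · exact absurd hxy (Lex.not_inr_lt_inl)
    · exact absurd (Lex.inr_lt_inr_iff.mp hxy) (Lex.not_inr_lt_inl)
    · show (⟨c.1, _⟩ : ↥D) < (⟨c'.1, _⟩ : ↥D)
      exact Subtype.mk_lt_mk.mpr (Subtype.coe_lt_coe.mpr
        (Lex.inr_lt_inr_iff.mp (Lex.inr_lt_inr_iff.mp hxy)))
  have hFsurj : Function.Surjective (Fmap D g A₁ A₂ A₃ Set.inter_subset_left
      Set.inter_subset_left Set.inter_subset_left) := by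
    intro x
    by_cases hA : ∀ n : ℤ, (x:ℝ) < q n
    · exact ⟨toLex (Sum.inl ⟨x.1, x.2, hA⟩), rfl⟩
    by_cases hC : ∀ n : ℤ, q n ≤ (x:ℝ)
    · exact ⟨toLex (Sum.inr (toLex (Sum.inr ⟨x.1, x.2, hC⟩))), rfl⟩
    push_neg at hA hC
    obtain ⟨n₀, hn₀⟩ := hA
    obtain ⟨m₀, hm₀⟩ := hC
    obtain ⟨n, hn, hmax⟩ := Int.exists_greatest_of_bdd (P := fun k => q k ≤ (x:ℝ))
      ⟨m₀, fun k hk => by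
        by_contra hkm
        push_neg at hkm
        exact absurd (hk.trans' (hqmono.monotone (by omega))) (not_le.mpr hm₀)⟩
      ⟨n₀, hn₀⟩
    have hlt : (x:ℝ) < q (n + 1) := by
      by_contra hcon
      push_neg at hcon
      exact absurd (hmax (n+1) hcon) (by omega)
    set b : ↥D := (g ^ (-n)) x with hb
    have hb0 : q 0 ≤ (b:ℝ) := by
      have h1 : p n ≤ x := Subtype.coe_le_coe.mp hn
      have h2 := (g ^ (-n)).monotone h1
      rw [hp] at h2
      rw [hcomp (-n) n z] at h2
      simp only [neg_add_cancel, zpow_zero] at h2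
      exact Subtype.coe_le_coe.mpr h2
    have hb1 : (b:ℝ) < q 1 := by
      have h1 : x < p (n+1) := Subtype.coe_lt_coe.mp hlt
      have h2 := (g ^ (-n)).strictMono h1
      rw [hp] at h2
      rw [hcomp (-n) (n+1) z] at h2
      have he : -n + (n + 1) = (1:ℤ) := by omega
      rw [he] at h2
      exact Subtype.coe_lt_coe.mpr h2
    refine ⟨toLex (Sum.inr (toLex (Sum.inl (toLex (n, ⟨(b:ℝ), b.2, hb0, hb1⟩))))), ?_⟩
    show (g ^ n) ⟨(b:ℝ), _⟩ = x
    have heta : (⟨(b:ℝ), b.2⟩ : ↥D) = b := rfl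
    rw [heta, hb, hcomp n (-n) x]
    simp
  exact ⟨(StrictMono.orderIsoOfSurjective _ hFmono hFsurj).symm⟩

lemma decomp_of_auto (D : Set ℝ) (g : ↥D ≃o ↥D) (z : ↥D) (hz : g z ≠ z) :
    ∃ A₁ A₂ A₃ : Set ℝ, A₁ ⊆ D ∧ A₂ ⊆ D ∧ A₃ ⊆ D ∧ A₂.Nonempty ∧
      Nonempty (↥D ≃o (↥A₁ ⊕ₗ ((ℤ ×ₗ ↥A₂) ⊕ₗ ↥A₃))) := by
  rcases lt_or_gt_of_ne hz with h | h
  · -- g z < z, use g.symm at the point g z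
    refine decomp_of_auto_aux D g.symm (g z) ?_
    rw [g.symm_apply_apply]
    exact h
  · exact decomp_of_auto_aux D g z h

/-! ### Part A : the order-type condition implies the ultrametric statement -/

lemma partA (D₁ D₂ : Set ℝ) (hD₁ : D₁ ⊆ Set.Ici 0) (hD₂ : D₂ ⊆ Set.Ici 0)
    (h₁ : (0 : ℝ) ∈ D₁) (h₂ : (0 : ℝ) ∈ D₂)
    (h : ∃ A₁ A₂ A₃ : Set ℝ, A₁ ⊆ Set.Ici 0 ∧ A₂ ⊆ Set.Ici 0 ∧ A₃ ⊆ Set.Ici 0 ∧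
        A₂.Nonempty ∧ IsZSumType D₁ A₁ A₂ A₃ ∧ IsZSumType D₂ A₁ A₂ A₃) :
    (∃ (X Y : Type) (dX : X → X → ℝ) (dY : Y → Y → ℝ),
        IsUltrametric dX ∧ IsUltrametric dY ∧
        distSet dX = D₁ ∧ distSet dY = D₂ ∧
        ∃ Φ₁ Φ₂ : X → Y, IsWeakSimilarity dX dY Φ₁ ∧ IsWeakSimilarity dX dY Φ₂ ∧
          ∃ Ψ₁ : Y → X, (∀ x, Ψ₁ (Φ₁ x) = x) ∧ (∀ y, Φ₁ (Ψ₁ y) = y) ∧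
            ¬ ∀ x y, dX (Ψ₁ (Φ₂ x)) (Ψ₁ (Φ₂ y)) = dX x y) := by
  obtain ⟨A₁, A₂, A₃, -, -, -, ⟨a, ha⟩, ⟨e₁⟩, ⟨e₂⟩⟩ := h
  let σ := SumShift ↥A₁ ↥A₂ ↥A₃
  let hiso : ↥D₁ ≃o ↥D₁ := (e₁.trans σ).trans e₁.symm
  let φ : ↥D₁ ≃o ↥D₂ := e₁.trans e₂.symm
  refine ⟨↥D₁, ↥D₂, dmax D₁, dmax D₂, dmax_ultra D₁ hD₁, dmax_ultra D₂ hD₂,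
    dmax_distSet D₁ hD₁ h₁, dmax_distSet D₂ hD₂ h₂,
    (fun x => φ x), (fun x => φ (hiso x)), dmax_weakSim hD₁ hD₂ h₁ h₂ φ,
    dmax_weakSim hD₁ hD₂ h₁ h₂ (hiso.trans φ), (fun y => φ.symm y),
    (fun x => φ.symm_apply_apply x), (fun y => φ.apply_symm_apply y), ?_⟩
  intro hiso_all
  have hfix : hiso ⟨0, h₁⟩ = ⟨0, h₁⟩ := iso_fix_zero hD₁ hD₁ h₁ h₁ hiso
  let m0 : ℤ ×ₗ ↥A₂ := toLex ((0:ℤ), (⟨a, ha⟩ : ↥A₂))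
  let y0 : (ℤ ×ₗ ↥A₂) ⊕ₗ ↥A₃ := toLex (Sum.inl m0)
  let pt : ↥A₁ ⊕ₗ ((ℤ ×ₗ ↥A₂) ⊕ₗ ↥A₃) := toLex (Sum.inr y0)
  let x₀ : ↥D₁ := e₁.symm pt
  have hmove : hiso x₀ ≠ x₀ := by
    intro hcon
    have h1 : e₁.symm (σ pt) = e₁.symm pt := by
      have : hiso x₀ = e₁.symm (σ pt) := by
        show e₁.symm (σ (e₁ (e₁.symm pt))) = _
        rw [e₁.apply_symm_apply]
      rw [← this, hcon]
    have h2 : σ pt = pt := e₁.symm.injective h1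
    have h3 := congrArg (projZ ↥A₁ ↥A₂ ↥A₃) h2
    have h4 : ((0:ℤ) + 1 : ℤ) = 0 := h3
    omega
  have hx0ne : x₀ ≠ ⟨0, h₁⟩ := by
    intro hcon
    apply hmove
    rw [hcon]
    exact hfix
  have hne2 : hiso x₀ ≠ ⟨0, h₁⟩ := by
    intro hcon
    exact hx0ne (hiso.injective (hcon.trans hfix.symm))
  have key := hiso_all x₀ ⟨0, h₁⟩
  beta_reduce at key
  rw [φ.symm_apply_apply, φ.symm_apply_apply, hfix] at key
  rw [dmax_ne D₁ hne2, dmax_ne D₁ hx0ne] at key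
  have h0coe : ((⟨0, h₁⟩ : ↥D₁) : ℝ) = 0 := rfl
  rw [h0coe, max_eq_left (hD₁ (hiso x₀).2), max_eq_left (hD₁ x₀.2)] at key
  exact hmove (Subtype.ext key)

/-! ### Part B : the semimetric statement implies the order-type condition -/

lemma partB (D₁ D₂ : Set ℝ) (hD₁ : D₁ ⊆ Set.Ici 0) (hD₂ : D₂ ⊆ Set.Ici 0)
    (h₁ : (0 : ℝ) ∈ D₁) (h₂ : (0 : ℝ) ∈ D₂)
    (h : ∃ (X Y : Type) (dX : X → X → ℝ) (dY : Y → Y → ℝ),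
        IsSemimetric dX ∧ IsSemimetric dY ∧
        distSet dX = D₁ ∧ distSet dY = D₂ ∧
        ∃ Φ₁ Φ₂ : X → Y, IsWeakSimilarity dX dY Φ₁ ∧ IsWeakSimilarity dX dY Φ₂ ∧
          ∃ Ψ₁ : Y → X, (∀ x, Ψ₁ (Φ₁ x) = x) ∧ (∀ y, Φ₁ (Ψ₁ y) = y) ∧
            ¬ ∀ x y, dX (Ψ₁ (Φ₂ x)) (Ψ₁ (Φ₂ y)) = dX x y) :
    (∃ A₁ A₂ A₃ : Set ℝ, A₁ ⊆ Set.Ici 0 ∧ A₂ ⊆ Set.Ici 0 ∧ A₃ ⊆ Set.Ici 0 ∧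
        A₂.Nonempty ∧ IsZSumType D₁ A₁ A₂ A₃ ∧ IsZSumType D₂ A₁ A₂ A₃) := by
  obtain ⟨X, Y, dX, dY, hsX, hsY, hdX, hdY, Φ₁, Φ₂, ⟨hΦ₁s, f₁, hf₁m, hf₁M, hf₁e⟩,
    ⟨hΦ₂s, f₂, hf₂m, hf₂M, hf₂e⟩, Ψ₁, hΨl, hΨr, hniso⟩ := h
  subst hdX hdY
  -- the two order isomorphisms `D(Y) ≃o D(X)` induced by `f₁` and `f₂`
  have hmono₁ : StrictMono (fun s : ↥(distSet dY) => (⟨f₁ s, hf₁M s.2⟩ : ↥(distSet dX))) :=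
    fun s t hst => Subtype.mk_lt_mk.mpr (hf₁m s.2 t.2 (Subtype.coe_lt_coe.mpr hst))
  have hmono₂ : StrictMono (fun s : ↥(distSet dY) => (⟨f₂ s, hf₂M s.2⟩ : ↥(distSet dX))) :=
    fun s t hst => Subtype.mk_lt_mk.mpr (hf₂m s.2 t.2 (Subtype.coe_lt_coe.mpr hst))
  have hsurj₁ : Function.Surjective
      (fun s : ↥(distSet dY) => (⟨f₁ s, hf₁M s.2⟩ : ↥(distSet dX))) := by
    rintro ⟨r, x, y, rfl⟩
    exact ⟨⟨dY (Φ₁ x) (Φ₁ y), Φ₁ x, Φ₁ y, rfl⟩, Subtype.ext (hf₁e x y).symm⟩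
  have hsurj₂ : Function.Surjective
      (fun s : ↥(distSet dY) => (⟨f₂ s, hf₂M s.2⟩ : ↥(distSet dX))) := by
    rintro ⟨r, x, y, rfl⟩
    exact ⟨⟨dY (Φ₂ x) (Φ₂ y), Φ₂ x, Φ₂ y, rfl⟩, Subtype.ext (hf₂e x y).symm⟩
  let iso₁ : ↥(distSet dY) ≃o ↥(distSet dX) :=
    StrictMono.orderIsoOfSurjective _ hmono₁ hsurj₁
  let iso₂ : ↥(distSet dY) ≃o ↥(distSet dX) :=
    StrictMono.orderIsoOfSurjective _ hmono₂ hsurj₂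
  let g : ↥(distSet dX) ≃o ↥(distSet dX) := iso₂.symm.trans iso₁
  have hgne : ∃ z : ↥(distSet dX), g z ≠ z := by
    by_contra hcon
    push_neg at hcon
    have hff : ∀ s : ↥(distSet dY), f₁ ↑s = f₂ ↑s := by
      intro s
      have := hcon (iso₂ s)
      have h2 : iso₁ s = iso₂ s := by
        have h3 : g (iso₂ s) = iso₁ s := by
          show iso₁ (iso₂.symm (iso₂ s)) = iso₁ s
          rw [iso₂.symm_apply_apply]
        rw [← h3, this]
      exact congrArg Subtype.val h2
    apply hniso
    intro x y
    have e1 : dX (Ψ₁ (Φ₂ x)) (Ψ₁ (Φ₂ y)) = f₁ (dY (Φ₂ x) (Φ₂ y)) := by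
      rw [hf₁e (Ψ₁ (Φ₂ x)) (Ψ₁ (Φ₂ y)), hΨr, hΨr]
    rw [e1, hff ⟨dY (Φ₂ x) (Φ₂ y), Φ₂ x, Φ₂ y, rfl⟩, ← hf₂e]
  obtain ⟨z, hz⟩ := hgne
  obtain ⟨A₁, A₂, A₃, hA₁, hA₂, hA₃, hne, ⟨iso⟩⟩ := decomp_of_auto (distSet dX) g z hz
  exact ⟨A₁, A₂, A₃, hA₁.trans hD₁, hA₂.trans hD₁, hA₃.trans hD₁, hne, ⟨iso⟩,
    ⟨iso₁.trans iso⟩⟩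

theorem stmt14 (D₁ D₂ : Set ℝ) (hD₁ : D₁ ⊆ Set.Ici 0) (hD₂ : D₂ ⊆ Set.Ici 0)
    (h₁ : (0 : ℝ) ∈ D₁) (h₂ : (0 : ℝ) ∈ D₂) :
    ((∃ A₁ A₂ A₃ : Set ℝ, A₁ ⊆ Set.Ici 0 ∧ A₂ ⊆ Set.Ici 0 ∧ A₃ ⊆ Set.Ici 0 ∧
        A₂.Nonempty ∧ IsZSumType D₁ A₁ A₂ A₃ ∧ IsZSumType D₂ A₁ A₂ A₃) ↔
      (∃ (X Y : Type) (dX : X → X → ℝ) (dY : Y → Y → ℝ),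
        IsUltrametric dX ∧ IsUltrametric dY ∧
        distSet dX = D₁ ∧ distSet dY = D₂ ∧
        ∃ Φ₁ Φ₂ : X → Y, IsWeakSimilarity dX dY Φ₁ ∧ IsWeakSimilarity dX dY Φ₂ ∧
          ∃ Ψ₁ : Y → X, (∀ x, Ψ₁ (Φ₁ x) = x) ∧ (∀ y, Φ₁ (Ψ₁ y) = y) ∧
            ¬ ∀ x y, dX (Ψ₁ (Φ₂ x)) (Ψ₁ (Φ₂ y)) = dX x y)) ∧
    ((∃ (X Y : Type) (dX : X → X → ℝ) (dY : Y → Y → ℝ),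
        IsUltrametric dX ∧ IsUltrametric dY ∧
        distSet dX = D₁ ∧ distSet dY = D₂ ∧
        ∃ Φ₁ Φ₂ : X → Y, IsWeakSimilarity dX dY Φ₁ ∧ IsWeakSimilarity dX dY Φ₂ ∧
          ∃ Ψ₁ : Y → X, (∀ x, Ψ₁ (Φ₁ x) = x) ∧ (∀ y, Φ₁ (Ψ₁ y) = y) ∧
            ¬ ∀ x y, dX (Ψ₁ (Φ₂ x)) (Ψ₁ (Φ₂ y)) = dX x y) ↔
      (∃ (X Y : Type) (dX : X → X → ℝ) (dY : Y → Y → ℝ),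
        IsSemimetric dX ∧ IsSemimetric dY ∧
        distSet dX = D₁ ∧ distSet dY = D₂ ∧
        ∃ Φ₁ Φ₂ : X → Y, IsWeakSimilarity dX dY Φ₁ ∧ IsWeakSimilarity dX dY Φ₂ ∧
          ∃ Ψ₁ : Y → X, (∀ x, Ψ₁ (Φ₁ x) = x) ∧ (∀ y, Φ₁ (Ψ₁ y) = y) ∧
            ¬ ∀ x y, dX (Ψ₁ (Φ₂ x)) (Ψ₁ (Φ₂ y)) = dX x y)) := by
  have weaken : (∃ (X Y : Type) (dX : X → X → ℝ) (dY : Y → Y → ℝ),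
        IsUltrametric dX ∧ IsUltrametric dY ∧
        distSet dX = D₁ ∧ distSet dY = D₂ ∧
        ∃ Φ₁ Φ₂ : X → Y, IsWeakSimilarity dX dY Φ₁ ∧ IsWeakSimilarity dX dY Φ₂ ∧
          ∃ Ψ₁ : Y → X, (∀ x, Ψ₁ (Φ₁ x) = x) ∧ (∀ y, Φ₁ (Ψ₁ y) = y) ∧
            ¬ ∀ x y, dX (Ψ₁ (Φ₂ x)) (Ψ₁ (Φ₂ y)) = dX x y) →
      (∃ (X Y : Type) (dX : X → X → ℝ) (dY : Y → Y → ℝ),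
        IsSemimetric dX ∧ IsSemimetric dY ∧
        distSet dX = D₁ ∧ distSet dY = D₂ ∧
        ∃ Φ₁ Φ₂ : X → Y, IsWeakSimilarity dX dY Φ₁ ∧ IsWeakSimilarity dX dY Φ₂ ∧
          ∃ Ψ₁ : Y → X, (∀ x, Ψ₁ (Φ₁ x) = x) ∧ (∀ y, Φ₁ (Ψ₁ y) = y) ∧
            ¬ ∀ x y, dX (Ψ₁ (Φ₂ x)) (Ψ₁ (Φ₂ y)) = dX x y) := by
    rintro ⟨X, Y, dX, dY, hX, hY, rest⟩
    exact ⟨X, Y, dX, dY, hX.1, hY.1, rest⟩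
  constructor
  · constructor
    · exact partA D₁ D₂ hD₁ hD₂ h₁ h₂
    · intro h
      exact partB D₁ D₂ hD₁ hD₂ h₁ h₂ (weaken h)
  · constructor
    · exact weaken
    · intro h
      exact partA D₁ D₂ hD₁ hD₂ h₁ h₂ (partB D₁ D₂ hD₁ hD₂ h₁ h₂ h)
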